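/- arXiv:2510.07584 — 4 statements merged into one kernel-verified Lean document; each statement's English description precedes it below -/
import Mathlib

section
/- Let q be a prime power and m, n, r, d, ℓ₁, ℓ₂ positive integers with m ≥ n > r ≥ d. Let A ⊆ F_q^m and B ⊆ F_q^n be subspaces of dimensions r and d respectively. Let A₁,…,A_{ℓ₁} ∈ F_q^{m×n} be matrices whose column spans all equal A, and B₁,…,B_{ℓ₂} ∈ F_q^{m×n} be matrices whose row spans all equal B. Define D ∈ F_q^{ℓ₂×ℓ₁} by D(i,j) = Trace(A_j · B_iᵀ). Then rank(D) ≤ min(rd, ℓ₁, ℓ₂). -/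
open Matrix

lemma sum_swap4 {F α β γ δ : Type*} [AddCommMonoid F] [Fintype α] [Fintype β] [Fintype γ] [Fintype δ]
    (f : α → β → γ → δ → F) :
    (∑ e, ∑ k, ∑ a, ∑ b, f e k a b) = ∑ a, ∑ b, ∑ e, ∑ k, f e k a b := by
  calc (∑ e, ∑ k, ∑ a, ∑ b, f e k a b)
      = ∑ e, ∑ a, ∑ k, ∑ b, f e k a b :=
        Finset.sum_congr rfl fun e _ => Finset.sum_comm
    _ = ∑ a, ∑ e, ∑ k, ∑ b, f e k a b := Finset.sum_comm
    _ = ∑ a, ∑ e, ∑ b, ∑ k, f e k a b :=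
        Finset.sum_congr rfl fun a _ => Finset.sum_congr rfl fun e _ => Finset.sum_comm
    _ = ∑ a, ∑ b, ∑ e, ∑ k, f e k a b :=
        Finset.sum_congr rfl fun a _ => Finset.sum_comm

theorem stmt_0 {F : Type*} [Field F] [Fintype F]
    (m n r d ℓ₁ ℓ₂ : ℕ) (hm : 0 < m) (hd : 0 < d) (hℓ₁ : 0 < ℓ₁) (hℓ₂ : 0 < ℓ₂)
    (hnm : n ≤ m) (hrn : r < n) (hdr : d ≤ r)
    (A : Submodule F (Fin m → F)) (hA : Module.finrank F A = r)
    (B : Submodule F (Fin n → F)) (hB : Module.finrank F B = d)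
    (Amat : Fin ℓ₁ → Matrix (Fin m) (Fin n) F)
    (hAmat : ∀ j, Submodule.span F (Set.range (Amat j)ᵀ) = A)
    (Bmat : Fin ℓ₂ → Matrix (Fin m) (Fin n) F)
    (hBmat : ∀ i, Submodule.span F (Set.range (Bmat i)) = B)
    (D : Matrix (Fin ℓ₂) (Fin ℓ₁) F)
    (hD : ∀ i j, D i j = Matrix.trace (Amat j * (Bmat i)ᵀ)) :
    D.rank ≤ min (r * d) (min ℓ₁ ℓ₂) := by
  classical
  have bA : Module.Basis (Fin r) F A := Module.finBasisOfFinrankEq F A hA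
  have bB : Module.Basis (Fin d) F B := Module.finBasisOfFinrankEq F B hB
  have hmemA : ∀ j k, (Amat j)ᵀ k ∈ A := fun j k =>
    (hAmat j) ▸ Submodule.subset_span ⟨k, rfl⟩
  have hmemB : ∀ i e, Bmat i e ∈ B := fun i e =>
    (hBmat i) ▸ Submodule.subset_span ⟨e, rfl⟩
  set X : Fin ℓ₁ → Fin r → Fin n → F := fun j a k => bA.repr ⟨(Amat j)ᵀ k, hmemA j k⟩ a with hXdef
  set P : Fin m → Fin r → F := fun e a => (bA a : Fin m → F) e with hPdef
  set Y : Fin ℓ₂ → Fin m → Fin d → F := fun i e b => bB.repr ⟨Bmat i e, hmemB i e⟩ b with hYdef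
  set Q : Fin d → Fin n → F := fun b k => (bB b : Fin n → F) k with hQdef
  have hX : ∀ j e k, Amat j e k = ∑ a, X j a k * P e a := by
    intro j e k
    have := congrArg Subtype.val (bA.sum_repr ⟨(Amat j)ᵀ k, hmemA j k⟩)
    have h2 := congrFun this e
    simp only [Submodule.coe_sum, SetLike.val_smul, Pi.smul_apply] at h2 ⊢
    rw [Finset.sum_apply] at h2
    simp only [Pi.smul_apply, smul_eq_mul] at h2
    exact h2.symm
  have hY : ∀ i e k, Bmat i e k = ∑ b, Y i e b * Q b k := by
    intro i e k
    have := congrArg Subtype.val (bB.sum_repr ⟨Bmat i e, hmemB i e⟩)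
    have h2 := congrFun this k
    simp only [Submodule.coe_sum, SetLike.val_smul, Pi.smul_apply] at h2 ⊢
    rw [Finset.sum_apply] at h2
    simp only [Pi.smul_apply, smul_eq_mul] at h2
    exact h2.symm
  set E : Matrix (Fin ℓ₂) (Fin r × Fin d) F := fun i p => ∑ e, P e p.1 * Y i e p.2 with hEdef
  set Fm : Matrix (Fin r × Fin d) (Fin ℓ₁) F := fun p j => ∑ k, X j p.1 k * Q p.2 k with hFdef
  have hDE : D = E * Fm := by
    ext i j
    rw [hD, Matrix.mul_apply]
    simp only [Matrix.trace, Matrix.diag, Matrix.mul_apply, Matrix.transpose_apply, hEdef, hFdef]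
    calc (∑ e, ∑ k, Amat j e k * Bmat i e k)
        = ∑ e, ∑ k, ∑ a, ∑ b, (P e a * Y i e b) * (X j a k * Q b k) := by
          refine Finset.sum_congr rfl fun e _ => Finset.sum_congr rfl fun k _ => ?_
          rw [hX j e k, hY i e k, Finset.sum_mul_sum]
          exact Finset.sum_congr rfl fun a _ => Finset.sum_congr rfl fun b _ => by ring
      _ = ∑ a, ∑ b, ∑ e, ∑ k, (P e a * Y i e b) * (X j a k * Q b k) := sum_swap4 _
      _ = ∑ p : Fin r × Fin d, (∑ e, P e p.1 * Y i e p.2) * (∑ k, X j p.1 k * Q p.2 k) := by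
          rw [Fintype.sum_prod_type]
          refine Finset.sum_congr rfl fun a _ => Finset.sum_congr rfl fun b _ => ?_
          rw [Finset.sum_mul_sum]
  refine le_min ?_ (le_min ?_ ?_)
  · calc D.rank = (E * Fm).rank := by rw [hDE]
      _ ≤ E.rank := Matrix.rank_mul_le_left E Fm
      _ ≤ Fintype.card (Fin r × Fin d) := Matrix.rank_le_card_width E
      _ = r * d := by simp
  · simpa using D.rank_le_card_width
  · simpa using D.rank_le_card_height
end

section
/- Let q be a prime power and let E⁽¹⁾,…,E⁽^{ℓ}⁾ be i.i.d. uniformly random elements of the set { E ∈ F_q^{m×n} : column span of E equals a fixed r-dimensional subspace E ⊆ F_q^m }, with r ≤ n and ℓ ≤ n. Then the probability that E⁽¹⁾,…,E⁽^{ℓ}⁾ are linearly dependent over F_q is O(q^{r(ℓ−n)}). -/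
open Matrix

open Module Submodule


open Matrix

-- geometric sum
lemma aux_geom_sum_le (q ℓ : ℕ) (hq : 2 ≤ q) : ∑ t ∈ Finset.range ℓ, q ^ t ≤ q ^ ℓ := by
  induction ℓ with
  | zero => simp
  | succ ℓ ih =>
    rw [Finset.sum_range_succ, pow_succ]
    have h2 : q ^ ℓ * 2 ≤ q ^ ℓ * q := Nat.mul_le_mul_left _ hq
    omega

lemma aux_card_sigma {ι : Type*} [Fintype ι] (α : ι → Type*) [∀ i, Finite (α i)] :
    Nat.card (Σ i, α i) = ∑ i, Nat.card (α i) := by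
  classical
  letI : ∀ i, Fintype (α i) := fun i => Fintype.ofFinite _
  simp [Nat.card_eq_fintype_card, Fintype.card_sigma]

lemma aux_card_le_mul_of_fibers {α β : Type*} [Finite α] [Finite β] (f : α → β) (k : ℕ)
    (h : ∀ b, Nat.card {a // f a = b} ≤ k) : Nat.card α ≤ k * Nat.card β := by
  classical
  letI := Fintype.ofFinite β
  calc Nat.card α = Nat.card (Σ b : β, {a // f a = b}) :=
        Nat.card_congr (Equiv.sigmaFiberEquiv f).symm
  _ = ∑ b : β, Nat.card {a // f a = b} := aux_card_sigma _
  _ ≤ ∑ _b : β, k := Finset.sum_le_sum fun b _ => h b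
  _ = k * Nat.card β := by
      rw [Finset.sum_const, Finset.card_univ, Nat.card_eq_fintype_card, smul_eq_mul, mul_comm]

lemma aux_prod_aux (q n : ℕ) (hq : 2 ≤ q) : ∀ r, 1 ≤ r → r ≤ n →
    (q:ℝ) ^ (r*n) * ((q:ℝ)^(n+1) - (q:ℝ)^r) * ((q:ℝ)^(n+2) - 2*(q:ℝ)^r)
      ≤ (∏ i ∈ Finset.range r, ((q:ℝ)^n - (q:ℝ)^i)) * (q:ℝ)^(2*n+3) := by
  have hq1 : (1:ℝ) ≤ (q:ℝ) := by exact_mod_cast hq.trans' (by norm_num)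
  have hq2 : (2:ℝ) ≤ (q:ℝ) := by exact_mod_cast hq
  have hq0 : (0:ℝ) < (q:ℝ) := by linarith
  intro r
  induction r with
  | zero => omega
  | succ r ih =>
    intro _ hrn
    rcases Nat.eq_zero_or_pos r with hr0 | hr1
    · subst hr0
      -- base case r = 1
      have hn1 : 1 ≤ n := by omega
      have hQ : (1:ℝ) ≤ (q:ℝ)^n := one_le_pow₀ hq1
      rw [Finset.prod_range_one, pow_zero]
      have e1 : (q:ℝ)^(n+1) - (q:ℝ)^1 = (q:ℝ) * ((q:ℝ)^n - 1) := by ring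
      have e2 : (q:ℝ)^(n+2) - 2*(q:ℝ)^1 = (q:ℝ) * ((q:ℝ)^(n+1) - 2) := by ring
      simp only [zero_add, one_mul, pow_one] at *
      rw [e1, e2]
      have key : (q:ℝ)^n * ((q:ℝ) * ((q:ℝ)^n - 1)) * ((q:ℝ) * ((q:ℝ)^(n+1) - 2))
          = ((q:ℝ)^n - 1) * ((q:ℝ)^n * (q:ℝ)^2 * ((q:ℝ)^(n+1) - 2)) := by ring
      rw [key]
      have h1 : (0:ℝ) ≤ (q:ℝ)^n - 1 := by linarith
      have h2 : (q:ℝ)^n * (q:ℝ)^2 * ((q:ℝ)^(n+1) - 2) ≤ (q:ℝ)^(2*n+3) := by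
        have : (q:ℝ)^n * (q:ℝ)^2 * ((q:ℝ)^(n+1) - 2) ≤ (q:ℝ)^n * (q:ℝ)^2 * (q:ℝ)^(n+1) := by
          have hnn : (0:ℝ) ≤ (q:ℝ)^n * (q:ℝ)^2 := by positivity
          nlinarith
        calc (q:ℝ)^n * (q:ℝ)^2 * ((q:ℝ)^(n+1) - 2) ≤ (q:ℝ)^n * (q:ℝ)^2 * (q:ℝ)^(n+1) := this
        _ = (q:ℝ)^(2*n+3) := by rw [← pow_add, ← pow_add]; ring_nf
      exact mul_le_mul_of_nonneg_left h2 h1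
    · -- step: r ≥ 1, r+1 ≤ n
      have hrn' : r ≤ n := by omega
      have IH := ih hr1 hrn'
      have hQa : (q:ℝ) * (q:ℝ)^r ≤ (q:ℝ)^n := by
        calc (q:ℝ) * (q:ℝ)^r = (q:ℝ)^(r+1) := by ring
        _ ≤ (q:ℝ)^n := pow_le_pow_right₀ hq1 hrn
      have ha1 : (1:ℝ) ≤ (q:ℝ)^r := one_le_pow₀ hq1
      have hQma : (0:ℝ) ≤ (q:ℝ)^n - (q:ℝ)^r := by nlinarith
      rw [Finset.prod_range_succ]
      set a := (q:ℝ)^r with hadef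
      set Q := (q:ℝ)^n with hQdef
      set c := (q:ℝ) with hcdef
      have key : Q*(c*Q - c*a)*(c^2*Q - 2*(c*a)) ≤ (c*Q - a)*(c^2*Q - 2*a)*(Q - a) := by
        have expand : (c*Q - a)*(c^2*Q - 2*a)*(Q - a) - Q*(c*Q - c*a)*(c^2*Q - 2*(c*a))
            = (Q - a)*a*(c*Q*(c-2) + 2*a) := by ring
        have h0 : (0:ℝ) ≤ (Q - a)*a*(c*Q*(c-2) + 2*a) := by
          have hc2 : (0:ℝ) ≤ c - 2 := by linarith
          have hQpos : (0:ℝ) < Q := by positivity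
          have ha0 : (0:ℝ) ≤ a := by positivity
          have : (0:ℝ) ≤ c*Q*(c-2) + 2*a := by
            have h1 : (0:ℝ) ≤ c*Q*(c-2) :=
              mul_nonneg (mul_nonneg (le_of_lt hq0) (le_of_lt hQpos)) hc2
            linarith
          exact mul_nonneg (mul_nonneg hQma ha0) this
        linarith [expand ▸ h0]
      calc c ^ ((r + 1) * n) * (c^(n+1) - c^(r+1)) * (c^(n+2) - 2*c^(r+1))
          = c^(r*n) * (Q*(c*Q - c*a)*(c^2*Q - 2*(c*a))) := by
            rw [hadef, hQdef, show (r+1)*n = r*n + n by ring]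
            ring
      _ ≤ c^(r*n) * ((c*Q - a)*(c^2*Q - 2*a)*(Q - a)) := by
            have : (0:ℝ) ≤ c^(r*n) := by positivity
            exact mul_le_mul_of_nonneg_left key this
      _ = (c^(r*n) * (c^(n+1) - c^r) * (c^(n+2) - 2*c^r)) * (Q - a) := by
            rw [hadef, hQdef]; ring
      _ ≤ ((∏ i ∈ Finset.range r, (Q - c^i)) * c^(2*n+3)) * (Q - a) :=
            mul_le_mul_of_nonneg_right IH hQma
      _ = (∏ i ∈ Finset.range r, (Q - c^i)) * (Q - a) * c^(2*n+3) := by ring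

lemma aux_prod_bound (q n r : ℕ) (hq : 2 ≤ q) (hrn : r ≤ n) :
    (q:ℝ) ^ (r * n) ≤ 4 * ∏ i ∈ Finset.range r, ((q:ℝ)^n - (q:ℝ)^i) := by
  have hq1 : (1:ℝ) ≤ (q:ℝ) := by exact_mod_cast hq.trans' (by norm_num)
  have hq2 : (2:ℝ) ≤ (q:ℝ) := by exact_mod_cast hq
  rcases Nat.eq_zero_or_pos r with hr0 | hr1
  · subst hr0; simp
  · have H := aux_prod_aux q n hq r hr1 hrn
    have hb1 : (q:ℝ)^(n+1) ≤ 2 * ((q:ℝ)^(n+1) - (q:ℝ)^r) := by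
      have h1 : (q:ℝ)^r ≤ (q:ℝ)^n := pow_le_pow_right₀ hq1 hrn
      have h2 : 2 * (q:ℝ)^n ≤ (q:ℝ)^(n+1) := by
        rw [pow_succ]
        nlinarith [pow_pos (show (0:ℝ) < q by linarith) n]
      linarith
    have hb2 : (q:ℝ)^(n+2) ≤ 2 * ((q:ℝ)^(n+2) - 2*(q:ℝ)^r) := by
      have h1 : (q:ℝ)^r ≤ (q:ℝ)^n := pow_le_pow_right₀ hq1 hrn
      have h2 : 4 * (q:ℝ)^n ≤ (q:ℝ)^(n+2) := by
        rw [show n+2 = n+1+1 by ring, pow_succ, pow_succ]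
        have hpn : (0:ℝ) ≤ (q:ℝ)^n := by positivity
        have hx : (0:ℝ) ≤ (q:ℝ)^n * (((q:ℝ)-2)*((q:ℝ)+2)) :=
          mul_nonneg hpn (mul_nonneg (by linarith) (by linarith))
        nlinarith [hx]
      linarith
    have hpos : (0:ℝ) < (q:ℝ)^(2*n+3) := by positivity
    rw [← mul_le_mul_iff_of_pos_right hpos]
    have hrnpos : (0:ℝ) ≤ (q:ℝ)^(r*n) := by positivity
    calc (q:ℝ)^(r*n) * (q:ℝ)^(2*n+3)
        = (q:ℝ)^(r*n) * ((q:ℝ)^(n+1) * (q:ℝ)^(n+2)) := by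
          rw [← pow_add]; ring_nf
    _ ≤ (q:ℝ)^(r*n) * ((2 * ((q:ℝ)^(n+1) - (q:ℝ)^r)) * (2 * ((q:ℝ)^(n+2) - 2*(q:ℝ)^r))) := by
        apply mul_le_mul_of_nonneg_left _ hrnpos
        have hA : (0:ℝ) ≤ (q:ℝ)^(n+1) := by positivity
        have hB : (0:ℝ) ≤ 2 * ((q:ℝ)^(n+1) - (q:ℝ)^r) := le_trans hA hb1
        exact mul_le_mul hb1 hb2 (by positivity) hB
    _ = 4 * ((q:ℝ)^(r*n) * ((q:ℝ)^(n+1) - (q:ℝ)^r) * ((q:ℝ)^(n+2) - 2*(q:ℝ)^r)) := by ring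
    _ ≤ 4 * ((∏ i ∈ Finset.range r, ((q:ℝ)^n - (q:ℝ)^i)) * (q:ℝ)^(2*n+3)) := by linarith
    _ = 4 * (∏ i ∈ Finset.range r, ((q:ℝ)^n - (q:ℝ)^i)) * (q:ℝ)^(2*n+3) := by ring

lemma aux_card_indep_le_card_span (F : Type) [Field F] [Fintype F] (m n r : ℕ)
    (E₀ : Submodule F (Fin m → F)) (hE₀ : Module.finrank F E₀ = r) :
    Nat.card {u : Fin r → (Fin n → F) // LinearIndependent F u}
      ≤ Nat.card {M : Matrix (Fin m) (Fin n) F // Submodule.span F (Set.range Mᵀ) = E₀} := by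
  classical
  obtain b := Module.finBasisOfFinrankEq F E₀ hE₀
  set v : Fin r → (Fin m → F) := fun k => (b k : Fin m → F) with hv_def
  have hv : LinearIndependent F v := by
    have := b.linearIndependent.map' E₀.subtype (Submodule.ker_subtype E₀)
    exact this
  have hvmem : ∀ k, v k ∈ E₀ := fun k => (b k).2
  have hspanv : Submodule.span F (Set.range v) = E₀ := by
    have h1 : Set.range v = E₀.subtype '' Set.range b := by
      rw [← Set.range_comp]; rfl
    rw [h1, ← Submodule.map_span, b.span_eq, Submodule.map_top, Submodule.range_subtype]
  -- the map
  set Φ : {u : Fin r → (Fin n → F) // LinearIndependent F u} →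
      Matrix (Fin m) (Fin n) F := fun u => Matrix.of (fun i j => ∑ k, v k i * u.1 k j) with hΦ
  have hcol : ∀ u j, (Φ u)ᵀ j = ∑ k, u.1 k j • v k := by
    intro u j; funext i
    simp [hΦ, Matrix.transpose_apply, Finset.sum_apply, mul_comm]
  have hspan : ∀ u, Submodule.span F (Set.range (Φ u)ᵀ) = E₀ := by
    intro u
    apply le_antisymm
    · rw [Submodule.span_le]
      rintro _ ⟨j, rfl⟩
      rw [hcol]
      exact Submodule.sum_mem _ fun k _ => Submodule.smul_mem _ _ (hvmem k)
    · rw [← hspanv, Submodule.span_le]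
      rintro _ ⟨k, rfl⟩
      -- use surjectivity of mulVecLin of U
      set U : Matrix (Fin r) (Fin n) F := Matrix.of u.1 with hU
      have hrank : U.rank = r := by
        have := u.2.rank_matrix (M := U)
        simpa using this
      have htop : LinearMap.range U.mulVecLin = ⊤ := by
        apply Submodule.eq_top_of_finrank_eq
        rw [← Matrix.rank, hrank, Module.finrank_fin_fun]
      obtain ⟨c, hc⟩ : ∃ c, U.mulVec c = Pi.single k 1 := by
        have : Pi.single k (1:F) ∈ LinearMap.range U.mulVecLin := by rw [htop]; trivial
        obtain ⟨c, hc⟩ := this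
        exact ⟨c, hc⟩
      have hvk : v k = ∑ j, c j • (Φ u)ᵀ j := by
        have : ∀ j, (Φ u)ᵀ j = ∑ k', u.1 k' j • v k' := hcol u
        calc v k = ∑ k', ((Pi.single k (1:F) : Fin r → F) k') • v k' := by
              simp [Pi.single_apply, ite_smul]
        _ = ∑ k', (U.mulVec c k') • v k' := by rw [hc]
        _ = ∑ k', (∑ j, c j * u.1 k' j) • v k' := by
              congr 1; funext k'
              congr 1
              simp [Matrix.mulVec, dotProduct, hU, mul_comm]
        _ = ∑ j, c j • ∑ k', u.1 k' j • v k' := by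
              simp_rw [Finset.sum_smul, Finset.smul_sum, mul_smul]
              rw [Finset.sum_comm]
        _ = ∑ j, c j • (Φ u)ᵀ j := by
              congr 1; funext j; rw [hcol]
      rw [hvk]
      exact Submodule.sum_mem _ fun j _ =>
        Submodule.smul_mem _ _ (Submodule.subset_span ⟨j, rfl⟩)
  have hinj : Function.Injective (fun u => (⟨Φ u, hspan u⟩ :
      {M : Matrix (Fin m) (Fin n) F // Submodule.span F (Set.range Mᵀ) = E₀})) := by
    intro u u' huu
    have hM : Φ u = Φ u' := congrArg Subtype.val huu
    apply Subtype.ext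
    funext k j
    have hj : (Φ u)ᵀ j = (Φ u')ᵀ j := by rw [hM]
    rw [hcol, hcol] at hj
    have hz : ∑ k', (u.1 k' j - u'.1 k' j) • v k' = 0 := by
      simp only [sub_smul]
      rw [Finset.sum_sub_distrib, hj, sub_self]
    have := Fintype.linearIndependent_iff.mp hv _ hz k
    exact sub_eq_zero.mp this
  exact Nat.card_le_card_of_injective _ hinj

lemma aux_exists_max_dep {F : Type*} [Field F] {ι : Type*} [Fintype ι] [LinearOrder ι]
    {V : Type*} [AddCommGroup V] [Module F V] {v : ι → V}
    (h : ¬ LinearIndependent F v) :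
    ∃ j, v j ∈ Submodule.span F (v '' {i | i < j}) := by
  classical
  rw [Fintype.not_linearIndependent_iff] at h
  obtain ⟨g, hsum, i0, hi0⟩ := h
  set s : Finset ι := Finset.univ.filter (fun i => g i ≠ 0) with hs
  have hne : s.Nonempty := ⟨i0, by simp [hs, hi0]⟩
  set j := s.max' hne with hj
  have hgj : g j ≠ 0 := by
    have := s.max'_mem hne
    simpa [hs] using this
  have hgt : ∀ i, j < i → g i = 0 := by
    intro i hij
    by_contra hgi
    exact absurd (s.le_max' i (by simp [hs, hgi])) (not_le.mpr hij)
  refine ⟨j, ?_⟩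
  have hsplit : ∑ i ∈ Finset.univ.filter (fun i => i < j), g i • v i + g j • v j = 0 := by
    rw [← hsum]
    rw [← Finset.sum_filter_add_sum_filter_not Finset.univ (fun i => i < j)]
    congr 1
    rw [Finset.sum_eq_single j]
    · intro i hi hij
      have : ¬ i < j := by simpa using (Finset.mem_filter.mp hi).2
      have : j < i := lt_of_le_of_ne (not_lt.mp this) (Ne.symm hij)
      rw [hgt i this, zero_smul]
    · intro hj'
      simp at hj'
  have hmem : g j • v j ∈ Submodule.span F (v '' {i | i < j}) := by
    have : g j • v j = - ∑ i ∈ Finset.univ.filter (fun i => i < j), g i • v i := by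
      exact eq_neg_of_add_eq_zero_right hsplit
    rw [this]
    apply Submodule.neg_mem
    apply Submodule.sum_mem
    intro i hi
    apply Submodule.smul_mem
    apply Submodule.subset_span
    exact ⟨i, by simpa using (Finset.mem_filter.mp hi).2, rfl⟩
  have := Submodule.smul_mem _ (g j)⁻¹ hmem
  rwa [inv_smul_smul₀ hgj] at this
lemma aux_card_dep (F : Type) [Field F] [Fintype F] {V A : Type*} [AddCommGroup V] [Module F V]
    [Finite V] [Finite A] (ϕ : A → V) (hϕ : Function.Injective ϕ) (ℓ : ℕ)
    (hq2 : 2 ≤ Fintype.card F) :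
    Nat.card {E : Fin ℓ → A // ¬ LinearIndependent F (fun j => ϕ (E j))}
      ≤ Fintype.card F ^ ℓ * Nat.card A ^ (ℓ - 1) := by
  classical
  letI := Fintype.ofFinite V
  set q := Fintype.card F with hqdef
  set S := Nat.card A with hSdef
  set P : Fin ℓ → (Fin ℓ → A) → Prop :=
    fun j E => ϕ (E j) ∈ Submodule.span F ((fun i => ϕ (E i)) '' {i | i < j}) with hP
  have step1 : Nat.card {E : Fin ℓ → A // ¬ LinearIndependent F (fun j => ϕ (E j))}
      ≤ Nat.card (Σ j : Fin ℓ, {E : Fin ℓ → A // P j E}) := by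
    apply Nat.card_le_card_of_injective
      (fun E => (⟨Classical.choose (aux_exists_max_dep E.2), E.1,
        Classical.choose_spec (aux_exists_max_dep E.2)⟩ : Σ j, {E : Fin ℓ → A // P j E}))
    intro a b hab
    apply Subtype.ext
    exact congrArg (fun (x : Σ j, {E : Fin ℓ → A // P j E}) => x.2.1) hab
  have step3 : ∀ j : Fin ℓ, Nat.card {E : Fin ℓ → A // P j E} ≤ q ^ (j:ℕ) * S ^ (ℓ - 1) := by
    intro j
    have fibers : ∀ c : {i : Fin ℓ // i ≠ j} → A,
        Nat.card {x : {E : Fin ℓ → A // P j E} //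
          (fun i : {i : Fin ℓ // i ≠ j} => x.1 i.1) = c} ≤ q ^ (j:ℕ) := by
      intro c
      set w : Fin ℓ → V := fun i => if h : i = j then 0 else ϕ (c ⟨i, h⟩) with hw
      set W := Submodule.span F (w '' {i | i < j}) with hW
      have hWfr : Module.finrank F W ≤ (j:ℕ) := by
        letI := Fintype.ofFinite ↥(w '' {i | i < j})
        refine le_trans (finrank_span_le_card _) ?_
        rw [Set.toFinset_image]
        refine le_trans (Finset.card_image_le) ?_
        rw [Set.toFinset_card]
        have : Fintype.card {i : Fin ℓ // i < j} = (j:ℕ) := by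
          rw [Fintype.card_subtype]
          have : Finset.univ.filter (fun i : Fin ℓ => i < j) = Finset.Iio j := by
            ext i; simp
          rw [this, Fin.card_Iio]
        exact le_of_eq (by simpa [Fintype.card_subtype] using this)
      have hWcard : Nat.card ↥W ≤ q ^ (j:ℕ) := by
        rw [Nat.card_eq_fintype_card, card_eq_pow_finrank (K := F) (V := ↥W)]
        exact Nat.pow_le_pow_right (le_trans one_le_two hq2) hWfr
      have hmemW : ∀ x : {x : {E : Fin ℓ → A // P j E} //
          (fun i : {i : Fin ℓ // i ≠ j} => x.1 i.1) = c}, ϕ (x.1.1 j) ∈ W := by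
        intro x
        have hagree : ∀ (i : Fin ℓ) (h : i ≠ j), x.1.1 i = c ⟨i, h⟩ := by
          intro i h
          exact congrFun x.2 ⟨i, h⟩
        have himg : (fun i => ϕ (x.1.1 i)) '' {i | i < j} = w '' {i | i < j} := by
          apply Set.image_congr
          intro i hi
          have hij : i ≠ j := ne_of_lt hi
          rw [hw]
          simp only [dif_neg hij]
          rw [hagree i hij]
        have h0 : ϕ (x.1.1 j) ∈
            Submodule.span F ((fun i => ϕ (x.1.1 i)) '' {i | i < j}) := x.1.2
        rwa [himg] at h0
      refine le_trans (Nat.card_le_card_of_injective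
        (fun x => (⟨ϕ (x.1.1 j), hmemW x⟩ : ↥W)) ?_) hWcard
      · intro x y hxy
        have h1 : ϕ (x.1.1 j) = ϕ (y.1.1 j) := congrArg Subtype.val hxy
        have h2 : x.1.1 j = y.1.1 j := hϕ h1
        apply Subtype.ext; apply Subtype.ext
        funext i
        by_cases hij : i = j
        · subst hij; exact h2
        · rw [congrFun x.2 ⟨i, hij⟩, congrFun y.2 ⟨i, hij⟩]
    have := aux_card_le_mul_of_fibers
      (fun (x : {E : Fin ℓ → A // P j E}) (i : {i : Fin ℓ // i ≠ j}) => x.1 i.1)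
      (q ^ (j:ℕ)) fibers
    refine le_trans this ?_
    have hcard : Nat.card ({i : Fin ℓ // i ≠ j} → A) = S ^ (ℓ - 1) := by
      rw [Nat.card_pi, Finset.prod_const, Finset.card_univ]
      congr 1
      rw [Fintype.card_subtype_compl, Fintype.card_fin, Fintype.card_subtype_eq]
    rw [hcard]
  calc Nat.card {E : Fin ℓ → A // ¬ LinearIndependent F (fun j => ϕ (E j))}
      ≤ Nat.card (Σ j : Fin ℓ, {E : Fin ℓ → A // P j E}) := step1
  _ = ∑ j : Fin ℓ, Nat.card {E : Fin ℓ → A // P j E} := aux_card_sigma _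
  _ ≤ ∑ j : Fin ℓ, q ^ (j:ℕ) * S ^ (ℓ - 1) := Finset.sum_le_sum fun j _ => step3 j
  _ = (∑ j : Fin ℓ, q ^ (j:ℕ)) * S ^ (ℓ - 1) := by rw [Finset.sum_mul]
  _ ≤ q ^ ℓ * S ^ (ℓ - 1) := by
      apply Nat.mul_le_mul_right
      rw [Fin.sum_univ_eq_sum_range]
      exact aux_geom_sum_le q ℓ hq2

/-- If `E⁽¹⁾, …, E⁽ˡ⁾` are i.i.d. uniform matrices with column span equal to a
fixed `r`-dimensional subspace `E₀ ⊆ F_q^m` (with `r ≤ n`, `ℓ ≤ n`), the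
probability that they are linearly dependent is `O(q^{r(ℓ − n)})`,
stated here as: (number of dependent tuples) · q^{rn} ≤ C · q^{rℓ} · (number of tuples). -/
theorem stmt_10 :
    ∃ C : ℝ, 0 < C ∧
      ∀ (F : Type) [Field F] [Fintype F] (m n r ℓ : ℕ),
        r ≤ n → ℓ ≤ n →
        ∀ E₀ : Submodule F (Fin m → F), Module.finrank F E₀ = r →
        (Nat.card {E : Fin ℓ → {M : Matrix (Fin m) (Fin n) F //
              Submodule.span F (Set.range Mᵀ) = E₀} //
            ¬ LinearIndependent F (fun j => (E j).1)} : ℝ)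
            * (Fintype.card F : ℝ) ^ (r * n)
          ≤ C * (Fintype.card F : ℝ) ^ (r * ℓ)
            * (Nat.card (Fin ℓ → {M : Matrix (Fin m) (Fin n) F //
                Submodule.span F (Set.range Mᵀ) = E₀}) : ℝ) := by
  refine ⟨4, by norm_num, ?_⟩
  intro F _ _ m n r ℓ hrn hℓn E₀ hE₀
  classical
  set T := {M : Matrix (Fin m) (Fin n) F // Submodule.span F (Set.range Mᵀ) = E₀} with hT
  have hq2 : 2 ≤ Fintype.card F := Fintype.one_lt_card
  set q := Fintype.card F with hq
  set S := Nat.card T with hS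
  have hq1R : (1:ℝ) ≤ (q:ℝ) := by exact_mod_cast le_trans one_le_two hq2
  have htot : Nat.card (Fin ℓ → T) = S ^ ℓ := by
    rw [Nat.card_pi, Finset.prod_const, Finset.card_univ, Fintype.card_fin]
  have hS4 : (q:ℝ) ^ (r*n) ≤ 4 * (S:ℝ) := by
    have h1 := aux_card_indep_le_card_span F m n r E₀ hE₀
    have h2 : Nat.card {u : Fin r → (Fin n → F) // LinearIndependent F u}
        = ∏ i : Fin r, (q ^ n - q ^ (i:ℕ)) := by
      have hk : r ≤ Module.finrank F (Fin n → F) := by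
        rw [Module.finrank_fin_fun]; exact hrn
      have h := card_linearIndependent (K := F) (V := Fin n → F) hk
      rwa [Module.finrank_fin_fun] at h
    have h3 : ((∏ i : Fin r, (q ^ n - q ^ (i:ℕ)) : ℕ) : ℝ)
        = ∏ i ∈ Finset.range r, ((q:ℝ)^n - (q:ℝ)^i) := by
      rw [← Fin.prod_univ_eq_prod_range (fun i => ((q:ℝ)^n - (q:ℝ)^i)) r]
      rw [Nat.cast_prod]
      apply Finset.prod_congr rfl
      intro i _
      have hle : q ^ (i:ℕ) ≤ q ^ n :=
        Nat.pow_le_pow_right (le_trans one_le_two hq2) (le_of_lt (lt_of_lt_of_le i.2 hrn))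
      rw [Nat.cast_sub hle]
      push_cast
      ring
    calc (q:ℝ)^(r*n) ≤ 4 * ∏ i ∈ Finset.range r, ((q:ℝ)^n - (q:ℝ)^i) :=
          aux_prod_bound q n r hq2 hrn
    _ = 4 * ((∏ i : Fin r, (q ^ n - q ^ (i:ℕ)) : ℕ) : ℝ) := by rw [h3]
    _ = 4 * ((Nat.card {u : Fin r → (Fin n → F) // LinearIndependent F u} : ℕ) : ℝ) := by
          rw [h2]
    _ ≤ 4 * (S:ℝ) := by
          have := (Nat.cast_le (α := ℝ)).mpr h1
          linarith
  have hdep : Nat.card {E : Fin ℓ → T // ¬ LinearIndependent F (fun j => (E j).1)}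
      ≤ q ^ ℓ * S ^ (ℓ - 1) :=
    aux_card_dep F (Subtype.val : T → Matrix (Fin m) (Fin n) F)
      Subtype.val_injective ℓ hq2
  rcases Nat.eq_zero_or_pos ℓ with hl0 | hl1
  · subst hl0
    have hempty : Nat.card {E : Fin 0 → T // ¬ LinearIndependent F (fun j => (E j).1)} = 0 := by
      have : IsEmpty {E : Fin 0 → T // ¬ LinearIndependent F (fun j => (E j).1)} :=
        ⟨fun E => E.2 linearIndependent_empty_type⟩
      exact Nat.card_of_isEmpty
    rw [hempty]
    push_cast
    rw [zero_mul]
    positivity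
  · rcases Nat.eq_zero_or_pos r with hr0 | hr1
    · subst hr0
      simp only [Nat.zero_mul, pow_zero, mul_one, one_mul]
      have hle : Nat.card {E : Fin ℓ → T // ¬ LinearIndependent F (fun j => (E j).1)}
          ≤ Nat.card (Fin ℓ → T) :=
        Nat.card_le_card_of_injective Subtype.val Subtype.val_injective
      have hleR := (Nat.cast_le (α := ℝ)).mpr hle
      have h0 : (0:ℝ) ≤ (Nat.card (Fin ℓ → T) : ℝ) := Nat.cast_nonneg _
      linarith
    · have hdepR : (Nat.card {E : Fin ℓ → T // ¬ LinearIndependent F (fun j => (E j).1)} : ℝ)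
          ≤ (q:ℝ)^ℓ * (S:ℝ)^(ℓ-1) := by exact_mod_cast hdep
      calc (Nat.card {E : Fin ℓ → T // ¬ LinearIndependent F (fun j => (E j).1)} : ℝ)
            * (q:ℝ)^(r*n)
          ≤ ((q:ℝ)^ℓ * (S:ℝ)^(ℓ-1)) * (q:ℝ)^(r*n) :=
            mul_le_mul_of_nonneg_right hdepR (by positivity)
        _ ≤ ((q:ℝ)^ℓ * (S:ℝ)^(ℓ-1)) * (4 * (S:ℝ)) :=
            mul_le_mul_of_nonneg_left hS4 (by positivity)
        _ = 4 * (q:ℝ)^ℓ * ((S:ℝ)^(ℓ-1) * (S:ℝ)) := by ring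
        _ = 4 * (q:ℝ)^ℓ * (S:ℝ)^ℓ := by
            rw [← pow_succ, Nat.sub_add_cancel hl1]
        _ ≤ 4 * (q:ℝ)^(r*ℓ) * (S:ℝ)^ℓ := by
            have hle : ℓ ≤ r * ℓ := Nat.le_mul_of_pos_left ℓ hr1
            have hp := pow_le_pow_right₀ hq1R hle
            have hSp : (0:ℝ) ≤ (S:ℝ)^ℓ := by positivity
            nlinarith
        _ = 4 * (q:ℝ)^(r*ℓ) * ((Nat.card (Fin ℓ → T) : ℕ) : ℝ) := by
            rw [htot]
            push_cast
            ring
end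

section
/- (Correctness of MinRankPKE) Let E ∈ F_q^{ℓ₁×mn} have rows ρ(E⁽ʲ⁾) where the E⁽ʲ⁾ ∈ F_q^{m×n} share a common column span of dimension r, let F ∈ F_q^{ℓ₂×mn} have rows ρ(F⁽ⁱ⁾) where the F⁽ⁱ⁾ share a common row span of dimension d, let G ∈ F_q^{k×mn}, S ∈ F_q^{ℓ₁×k}, T := SG + E, U := FGᵀ, and V := FTᵀ + c for any c ∈ F_q^{ℓ₂×ℓ₁}. Then V − USᵀ = FEᵀ + c and rank(FEᵀ) ≤ rd; hence if c is a codeword of a rank-metric code correcting errors of rank up to ⌊(ℓ₂−κ)/2⌋ and rd ≤ ⌊(ℓ₂−κ)/2⌋, the decoder recovers c. -/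
open Matrix

def rho {F : Type*} [Field F] {m n : ℕ} (hn : 0 < n)
    (A : Matrix (Fin m) (Fin n) F) : Fin (m * n) → F :=
  fun k => A ⟨(k : ℕ) / n, (Nat.div_lt_iff_lt_mul hn).mpr k.isLt⟩
    ⟨(k : ℕ) % n, Nat.mod_lt _ hn⟩

lemma rho_eq {F : Type*} [Field F] {m n : ℕ} (hn : 0 < n)
    (A : Matrix (Fin m) (Fin n) F) (k : Fin (m*n)) :
    rho hn A k = A k.divNat k.modNat := rfl

lemma rho_dot {F : Type*} [Field F] {m n : ℕ} (hn : 0 < n)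
    (A B : Matrix (Fin m) (Fin n) F) :
    ∑ k, rho hn A k * rho hn B k = ∑ a, ∑ b, A a b * B a b := by
  have : ∑ a, ∑ b, A a b * B a b = ∑ p : Fin m × Fin n, A p.1 p.2 * B p.1 p.2 :=
    (Fintype.sum_prod_type (fun p : Fin m × Fin n => A p.1 p.2 * B p.1 p.2)).symm
  rw [this]
  refine (Fintype.sum_equiv finProdFinEquiv.symm (fun k => rho hn A k * rho hn B k) (fun p => A p.1 p.2 * B p.1 p.2) ?_)
  intro k
  simp [rho_eq, finProdFinEquiv]

/-- If every member of a family of vectors lies in a submodule with a finite basis,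
the family factors through the basis. -/
lemma factor_through_basis {F : Type*} [Field F] {N q : ℕ}
    (W : Submodule F (Fin N → F)) (b : Module.Basis (Fin q) F W)
    (v : Fin N → F) (hv : v ∈ W) :
    v = fun a => ∑ s, b.repr ⟨v, hv⟩ s * (b s : Fin N → F) a := by
  have h := b.sum_repr ⟨v, hv⟩
  funext a
  have := congrArg (fun w : W => (w : Fin N → F) a) h
  simp only [Submodule.coe_sum, Submodule.coe_smul, Finset.sum_apply, Pi.smul_apply, smul_eq_mul, Submodule.coe_mk] at this
  exact this.symm

/-- Correctness of MinRankPKE. -/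
theorem stmt_13 {Fq : Type*} [Field Fq] [Fintype Fq]
    (m n r d k ℓ₁ ℓ₂ κ : ℕ) (hn : 0 < n)
    (E : Fin ℓ₁ → Matrix (Fin m) (Fin n) Fq)
    (Esp : Submodule Fq (Fin m → Fq)) (hEsp : Module.finrank Fq Esp = r)
    (hE : ∀ j, Submodule.span Fq (Set.range (E j)ᵀ) = Esp)
    (Fm : Fin ℓ₂ → Matrix (Fin m) (Fin n) Fq)
    (Fsp : Submodule Fq (Fin n → Fq)) (hFsp : Module.finrank Fq Fsp = d)
    (hF : ∀ i, Submodule.span Fq (Set.range (Fm i)) = Fsp)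
    (Emat : Matrix (Fin ℓ₁) (Fin (m * n)) Fq) (hEmat : ∀ j, Emat j = rho hn (E j))
    (Fmat : Matrix (Fin ℓ₂) (Fin (m * n)) Fq) (hFmat : ∀ i, Fmat i = rho hn (Fm i))
    (G : Matrix (Fin k) (Fin (m * n)) Fq) (S : Matrix (Fin ℓ₁) (Fin k) Fq)
    (c : Matrix (Fin ℓ₂) (Fin ℓ₁) Fq)
    (T : Matrix (Fin ℓ₁) (Fin (m * n)) Fq) (hT : T = S * G + Emat)
    (U : Matrix (Fin ℓ₂) (Fin k) Fq) (hU : U = Fmat * Gᵀ)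
    (V : Matrix (Fin ℓ₂) (Fin ℓ₁) Fq) (hV : V = Fmat * Tᵀ + c)
    (Code : Set (Matrix (Fin ℓ₂) (Fin ℓ₁) Fq)) (hc : c ∈ Code)
    (decode : Matrix (Fin ℓ₂) (Fin ℓ₁) Fq → Matrix (Fin ℓ₂) (Fin ℓ₁) Fq)
    (hdec : ∀ cw ∈ Code, ∀ err : Matrix (Fin ℓ₂) (Fin ℓ₁) Fq,
      err.rank ≤ (ℓ₂ - κ) / 2 → decode (cw + err) = cw)
    (hrd : r * d ≤ (ℓ₂ - κ) / 2) :
    V - U * Sᵀ = Fmat * Ematᵀ + c ∧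
    (Fmat * Ematᵀ).rank ≤ r * d ∧
    decode (V - U * Sᵀ) = c := by
  -- Part 1: algebra
  have h1 : V - U * Sᵀ = Fmat * Ematᵀ + c := by
    subst hV hU hT
    rw [transpose_add, transpose_mul, Matrix.mul_add, Matrix.mul_assoc]
    abel
  -- Part 2: rank bound
  have hrank : (Fmat * Ematᵀ).rank ≤ r * d := by
    -- bases
    have bE : Module.Basis (Fin r) Fq Esp := by
      exact Module.finBasisOfFinrankEq Fq Esp hEsp
    have bF : Module.Basis (Fin d) Fq Fsp := by
      exact Module.finBasisOfFinrankEq Fq Fsp hFsp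
    have hEmem : ∀ j b, (E j)ᵀ b ∈ Esp := fun j b => by
      rw [← hE j]; exact Submodule.subset_span ⟨b, rfl⟩
    have hFmem : ∀ i a, Fm i a ∈ Fsp := fun i a => by
      rw [← hF i]; exact Submodule.subset_span ⟨a, rfl⟩
    set C : Fin ℓ₁ → Matrix (Fin r) (Fin n) Fq :=
      fun j s b => bE.repr ⟨(E j)ᵀ b, hEmem j b⟩ s with hC
    set R : Fin ℓ₂ → Matrix (Fin m) (Fin d) Fq :=
      fun i a t => bF.repr ⟨Fm i a, hFmem i a⟩ t with hR
    set P : Matrix (Fin m) (Fin r) Fq := fun a s => (bE s : Fin m → Fq) a with hP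
    set Q : Matrix (Fin d) (Fin n) Fq := fun t b => (bF t : Fin n → Fq) b with hQ
    have hEfac : ∀ j, E j = P * C j := by
      intro j; ext a b
      have := congrFun (factor_through_basis Esp bE ((E j)ᵀ b) (hEmem j b)) a
      rw [mul_apply]; simpa [hP, hC, mul_comm] using this
    have hFfac : ∀ i, Fm i = R i * Q := by
      intro i; ext a b
      have := congrFun (factor_through_basis Fsp bF (Fm i a) (hFmem i a)) b
      rw [mul_apply]; simpa [hR, hQ] using this
    set X : Matrix (Fin ℓ₂) (Fin r × Fin d) Fq :=
      fun i st => (Pᵀ * R i) st.1 st.2 with hX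
    set Y : Matrix (Fin ℓ₁) (Fin r × Fin d) Fq :=
      fun j st => (Q * (C j)ᵀ) st.2 st.1 with hY
    have key : Fmat * Ematᵀ = X * Yᵀ := by
      ext i j
      have lhs : (Fmat * Ematᵀ) i j = trace (Fm i * (E j)ᵀ) := by
        rw [mul_apply]
        simp only [transpose_apply, hFmat, hEmat]
        rw [rho_dot]
        simp [trace, mul_apply, Matrix.diag]
      have rhs : (X * Yᵀ) i j = trace ((Pᵀ * R i) * (Q * (C j)ᵀ)) := by
        rw [mul_apply]
        simp only [transpose_apply]; simp only [hX, hY]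
        rw [Fintype.sum_prod_type]
        simp [trace, mul_apply, Matrix.diag]
      rw [lhs, rhs, hEfac j, hFfac i]
      rw [transpose_mul, ← Matrix.mul_assoc, Matrix.mul_assoc (R i * Q)]
      rw [trace_mul_comm, Matrix.mul_assoc, Matrix.mul_assoc, trace_mul_comm,
        ← Matrix.mul_assoc, ← Matrix.mul_assoc, Matrix.mul_assoc (Pᵀ * R i)]
    rw [key]
    calc (X * Yᵀ).rank ≤ X.rank := Matrix.rank_mul_le_left X Yᵀ
      _ ≤ Fintype.card (Fin r × Fin d) := Matrix.rank_le_card_width X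
      _ = r * d := by simp
  refine ⟨h1, hrank, ?_⟩
  rw [h1, add_comm]
  exact hdec c hc _ (le_trans hrank hrd)
end

section
/- Let x ∈ F_2^{mn}, H ∈ F_2^{(mn−k)×mn} uniform, u ∈ F_2^{mn−k} uniform, r ∈ F_2^{mn} arbitrary, and M := H − uᵀ·r (rank-one update). Then M is uniformly distributed; moreover H·xᵀ = M·xᵀ + (x·r)·uᵀ, so that setting s' := M·xᵀ + uᵀ, the pair (M, s') equals (M, H·xᵀ) when x·r = 1 and (M, uniform) when x·r = 0 — with s' uniform and independent of M in the latter case. -/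
open Matrix

/-- Key algebraic identity in the Goldreich–Levin based search-to-decision
reduction: for `M := H − uᵀ·r` (a rank-one update), the map `H ↦ M` is a
bijection (hence `M` is uniform when `H` is), `H·xᵀ = M·xᵀ + (x·r)·uᵀ`, and
setting `s' := M·xᵀ + uᵀ`, we get `s' = H·xᵀ` when `x·r = 1`, while when
`x·r = 0` the map `u ↦ s'` is a bijection (hence `s'` is uniform,
independent of `M`). -/
theorem stmt_14 (N K : ℕ) (x r : Fin N → ZMod 2) (u : Fin K → ZMod 2)
    (H M : Matrix (Fin K) (Fin N) (ZMod 2))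
    (hM : M = H - Matrix.vecMulVec u r) :
    (Function.Bijective fun H' : Matrix (Fin K) (Fin N) (ZMod 2) =>
        H' - Matrix.vecMulVec u r) ∧
    H.mulVec x = M.mulVec x + (∑ j, x j * r j) • u ∧
    ((∑ j, x j * r j) = 1 → M.mulVec x + u = H.mulVec x) ∧
    ((∑ j, x j * r j) = 0 →
      Function.Bijective fun u' : Fin K → ZMod 2 => M.mulVec x + u') := by
  have key : H.mulVec x = M.mulVec x + (∑ j, x j * r j) • u := by
    subst hM
    funext i
    simp [mulVec, dotProduct, vecMulVec, Matrix.sub_apply, sub_mul, Finset.sum_sub_distrib,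
      Finset.mul_sum, Finset.sum_mul]
    rw [sub_add_eq_add_sub, eq_sub_iff_add_eq, add_left_cancel_iff]
    exact Finset.sum_congr rfl (fun j _ => by ring)
  refine ⟨⟨fun a b h => by simpa using congrArg (· + Matrix.vecMulVec u r) h,
    fun a => ⟨a + Matrix.vecMulVec u r, by simp⟩⟩, key, fun h1 => by
      rw [key, h1, one_smul], fun h0 => ⟨fun a b h => by simpa using h,
      fun a => ⟨a - M.mulVec x, by simp⟩⟩⟩
end
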